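/- For all nonnegative integers m, n and all reals α, β: G(m,n;α,β,−αβ) = α^m β^n. Consequently, if the parameters of the spatial autoregressive process satisfy γ = −αβ, then for all integers k₁, ℓ₁, k₂, ℓ₂ ≥ 1: Cov(X_{k₁,ℓ₁}, X_{k₂,ℓ₂}) = Σ_{i=1}^{min(k₁,k₂)} Σ_{j=1}^{min(ℓ₁,ℓ₂)} α^{k₁+k₂−2i} β^{ℓ₁+ℓ₂−2j}. -/

import Mathlib

open MeasureTheory ProbabilityTheory Filter

/-- `G m n α β γ = Σ_{r=0}^{min(m,n)} ((m+n−r)!/((m−r)!(n−r)!r!)) α^{m−r} β^{n−r} γ^r`. -/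
noncomputable def G (m n : ℕ) (α β γ : ℝ) : ℝ :=
  ∑ r ∈ Finset.range (min m n + 1),
    ((Nat.factorial (m + n - r) : ℝ) /
      ((Nat.factorial (m - r) : ℝ) * (Nat.factorial (n - r) : ℝ) * (Nat.factorial r : ℝ))) *
      α ^ (m - r) * β ^ (n - r) * γ ^ r

/-- The covariance of two real random variables. -/
noncomputable def cov {Ω : Type*} [MeasurableSpace Ω] (P : Measure Ω) (X Y : Ω → ℝ) : ℝ :=
  ∫ ω, (X ω - ∫ x, X x ∂P) * (Y ω - ∫ x, Y x ∂P) ∂P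


/-- real trinomial coefficient -/
noncomputable def Mlt (a b c : ℕ) : ℝ :=
  (Nat.factorial (a + b + c) : ℝ) /
    ((Nat.factorial a : ℝ) * (Nat.factorial b : ℝ) * (Nat.factorial c : ℝ))

lemma fact_ne (n : ℕ) : (Nat.factorial n : ℝ) ≠ 0 := by
  exact_mod_cast (Nat.factorial_pos n).ne'

lemma Mlt_rec (a b c : ℕ) :
    Mlt (a+1) (b+1) (c+1) = Mlt a (b+1) (c+1) + Mlt (a+1) b (c+1) + Mlt (a+1) (b+1) c := by
  unfold Mlt
  have h1 : (a+1) + (b+1) + (c+1) = (a + b + c + 2) + 1 := by omega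
  have h2 : a + (b+1) + (c+1) = a + b + c + 2 := by omega
  have h3 : (a+1) + b + (c+1) = a + b + c + 2 := by omega
  have h4 : (a+1) + (b+1) + c = a + b + c + 2 := by omega
  rw [h1, h2, h3, h4, Nat.factorial_succ (a+b+c+2), Nat.factorial_succ a,
    Nat.factorial_succ b, Nat.factorial_succ c]
  have ha := fact_ne a; have hb := fact_ne b; have hc := fact_ne c
  have ha1 : ((a:ℝ)+1) ≠ 0 := by positivity
  have hb1 : ((b:ℝ)+1) ≠ 0 := by positivity
  have hc1 : ((c:ℝ)+1) ≠ 0 := by positivity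
  push_cast
  field_simp
  ring

lemma Mlt_rec_c0 (a b : ℕ) :
    Mlt (a+1) (b+1) 0 = Mlt a (b+1) 0 + Mlt (a+1) b 0 := by
  unfold Mlt
  have h1 : (a+1) + (b+1) + 0 = (a + b + 1) + 1 := by omega
  have h2 : a + (b+1) + 0 = a + b + 1 := by omega
  have h3 : (a+1) + b + 0 = a + b + 1 := by omega
  rw [h1, h2, h3, Nat.factorial_succ (a+b+1), Nat.factorial_succ a, Nat.factorial_succ b]
  have ha := fact_ne a; have hb := fact_ne b
  have ha1 : ((a:ℝ)+1) ≠ 0 := by positivity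
  have hb1 : ((b:ℝ)+1) ≠ 0 := by positivity
  push_cast
  field_simp
  ring

lemma Mlt_rec_a0 (b c : ℕ) :
    Mlt 0 (b+1) (c+1) = Mlt 0 b (c+1) + Mlt 0 (b+1) c := by
  unfold Mlt
  have h1 : 0 + (b+1) + (c+1) = (b + c + 1) + 1 := by omega
  have h2 : 0 + b + (c+1) = b + c + 1 := by omega
  have h3 : 0 + (b+1) + c = b + c + 1 := by omega
  rw [h1, h2, h3, Nat.factorial_succ (b+c+1), Nat.factorial_succ b, Nat.factorial_succ c]
  have hb := fact_ne b; have hc := fact_ne c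
  have hb1 : ((b:ℝ)+1) ≠ 0 := by positivity
  have hc1 : ((c:ℝ)+1) ≠ 0 := by positivity
  push_cast
  field_simp
  ring

lemma Mlt_00 (c : ℕ) : Mlt 0 0 c = 1 := by
  unfold Mlt
  simp only [Nat.zero_add, Nat.factorial_zero, Nat.cast_one, one_mul]
  rw [div_self (fact_ne c)]

lemma G_eq_sum_Mlt (m n : ℕ) (α β γ : ℝ) :
    G m n α β γ = ∑ r ∈ Finset.range (min m n + 1),
      Mlt (m - r) (n - r) r * α ^ (m - r) * β ^ (n - r) * γ ^ r := by
  unfold G Mlt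
  refine Finset.sum_congr rfl fun r hr => ?_
  have hr' : r ≤ min m n := by
    have := Finset.mem_range.mp hr; omega
  have hrm : r ≤ m := le_trans hr' (min_le_left _ _)
  have hrn : r ≤ n := le_trans hr' (min_le_right _ _)
  have h : (m - r) + (n - r) + r = m + n - r := by omega
  rw [h]

lemma G_symm (m n : ℕ) (α β γ : ℝ) : G m n α β γ = G n m β α γ := by
  unfold G
  rw [min_comm]
  refine Finset.sum_congr rfl fun r hr => ?_
  rw [add_comm m n]
  ring

lemma G_right_zero (m : ℕ) (α β γ : ℝ) : G m 0 α β γ = α ^ m := by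
  unfold G
  rw [show min m 0 + 1 = 1 by simp, Finset.sum_range_one]
  simp only [Nat.sub_zero, Nat.add_zero, Nat.factorial_zero, Nat.cast_one, mul_one, pow_zero]
  rw [div_self (fact_ne m)]
  ring

lemma G_left_zero (n : ℕ) (α β γ : ℝ) : G 0 n α β γ = β ^ n := by
  rw [G_symm, G_right_zero]

lemma sum_guard {f : ℕ → ℝ} {k N : ℕ} (h : k < N) :
    ∑ r ∈ Finset.range N, (if r ≤ k then f r else 0) = ∑ r ∈ Finset.range (k+1), f r := by
  have hsub : Finset.range (k+1) ⊆ Finset.range N := Finset.range_subset_range.mpr h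
  rw [← Finset.sum_subset hsub (fun x _ hx => ?_)]
  · exact Finset.sum_congr rfl fun r hr => if_pos (by
      have := Finset.mem_range.mp hr; omega)
  · have : ¬ x ≤ k := fun hxk => hx (Finset.mem_range.mpr (by omega))
    exact if_neg this

lemma G_rec (m n : ℕ) (α β γ : ℝ) (hm : 1 ≤ m) (hmn : m ≤ n) :
    G m n α β γ = α * G (m-1) n α β γ + β * G m (n-1) α β γ + γ * G (m-1) (n-1) α β γ := by
  obtain ⟨p, rfl⟩ : ∃ p, m = p + 1 := ⟨m - 1, by omega⟩
  obtain ⟨q, rfl⟩ : ∃ q, n = q + 1 := ⟨n - 1, by omega⟩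
  have hpq : p ≤ q := by omega
  simp only [Nat.add_sub_cancel]
  rw [G_eq_sum_Mlt, G_eq_sum_Mlt, G_eq_sum_Mlt, G_eq_sum_Mlt]
  have hmin1 : min (p+1) (q+1) = p + 1 := by omega
  have hmin2 : min p (q+1) = p := by omega
  have hmin4 : min p q = p := by omega
  rw [hmin1, hmin2, hmin4]
  have hA : α * ∑ r ∈ Finset.range (p+1),
        Mlt (p-r) (q+1-r) r * α^(p-r) * β^(q+1-r) * γ^r
      = ∑ r ∈ Finset.range (p+2),
        (if r ≤ p then Mlt (p-r) (q+1-r) r * α^(p+1-r) * β^(q+1-r) * γ^r else 0) := by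
    rw [sum_guard (by omega), Finset.mul_sum]
    refine Finset.sum_congr rfl fun r hr => ?_
    have hrp : r ≤ p := by have := Finset.mem_range.mp hr; omega
    rw [show p + 1 - r = (p - r) + 1 by omega, pow_succ]
    ring
  have hB : β * ∑ r ∈ Finset.range (min (p+1) q + 1),
        Mlt (p+1-r) (q-r) r * α^(p+1-r) * β^(q-r) * γ^r
      = ∑ r ∈ Finset.range (p+2),
        (if r ≤ min (p+1) q then Mlt (p+1-r) (q-r) r * α^(p+1-r) * β^(q+1-r) * γ^r else 0) := by
    rw [sum_guard (by omega), Finset.mul_sum]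
    refine Finset.sum_congr rfl fun r hr => ?_
    have hrq : r ≤ q := by have := Finset.mem_range.mp hr; omega
    rw [show q + 1 - r = (q - r) + 1 by omega, pow_succ]
    ring
  have hC : γ * ∑ r ∈ Finset.range (p+1),
        Mlt (p-r) (q-r) r * α^(p-r) * β^(q-r) * γ^r
      = ∑ r ∈ Finset.range (p+2),
        (if 1 ≤ r then Mlt (p-(r-1)) (q-(r-1)) (r-1) * α^(p-(r-1)) * β^(q-(r-1)) * γ^r else 0) := by
    rw [Finset.mul_sum, Finset.sum_range_succ'
      (fun r => if 1 ≤ r then Mlt (p-(r-1)) (q-(r-1)) (r-1) * α^(p-(r-1)) * β^(q-(r-1)) * γ^r else 0) (p+1)]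
    simp only [Nat.add_sub_cancel, if_pos (Nat.le_add_left 1 _), if_neg (by norm_num : ¬ (1:ℕ) ≤ 0),
      add_zero]
    refine Finset.sum_congr rfl fun r hr => ?_
    rw [pow_succ]
    ring
  rw [hA, hB, hC, ← Finset.sum_add_distrib, ← Finset.sum_add_distrib]
  refine Finset.sum_congr rfl fun r hr => ?_
  have hrp1 : r ≤ p + 1 := by have := Finset.mem_range.mp hr; omega
  rcases Nat.eq_zero_or_pos r with rfl | hr1
  · rw [if_pos (Nat.zero_le p), if_pos (Nat.zero_le _), if_neg (by norm_num)]
    simp only [Nat.sub_zero, pow_zero, mul_one, add_zero]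
    rw [show p + 1 = p + 1 from rfl]
    rw [Mlt_rec_c0 p q]
    ring
  · -- 1 ≤ r
    obtain ⟨s, rfl⟩ : ∃ s, r = s + 1 := ⟨r - 1, by omega⟩
    rcases Nat.lt_or_ge s p with hsp | hsp
    · -- middle case : 1 ≤ r ≤ p
      have hsq : s < q := by omega
      obtain ⟨a, ha⟩ : ∃ a, p - s = a + 1 := ⟨p - s - 1, by omega⟩
      obtain ⟨b, hb⟩ : ∃ b, q - s = b + 1 := ⟨q - s - 1, by omega⟩
      rw [if_pos (by omega : s + 1 ≤ p), if_pos (by omega : s + 1 ≤ min (p+1) q),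
        if_pos (by omega : 1 ≤ s + 1)]
      rw [show p + 1 - (s+1) = a + 1 by omega, show q + 1 - (s+1) = b + 1 by omega,
        show p - (s+1) = a by omega, show q - (s+1) = b by omega,
        show s + 1 - 1 = s by omega, show p - s = a + 1 by omega, show q - s = b + 1 by omega]
      rw [Mlt_rec a b s, pow_succ γ s]
      ring
    · -- top case : r = p + 1
      have hsp' : s = p := by omega
      subst hsp'
      rw [if_neg (by omega)]
      rcases Nat.lt_or_ge s q with hq | hq
      · -- q > p
        obtain ⟨b, hb⟩ : ∃ b, q - s = b + 1 := ⟨q - s - 1, by omega⟩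
        rw [if_pos (by omega : s + 1 ≤ min (s+1) q), if_pos (by omega : 1 ≤ s + 1)]
        rw [show s + 1 - (s+1) = 0 by omega, show q + 1 - (s+1) = b + 1 by omega,
          show q - (s+1) = b by omega, show s + 1 - 1 = s by omega,
          show s - s = 0 by omega, show q - s = b + 1 by omega]
        rw [Mlt_rec_a0 b s, pow_succ γ s]
        ring
      · -- q = p
        have hq' : q = s := by omega
        rw [if_neg (by omega), if_pos (by omega : 1 ≤ s + 1)]
        rw [show s + 1 - (s+1) = 0 by omega, show q + 1 - (s+1) = 0 by omega,
          show s + 1 - 1 = s by omega, show s - s = 0 by omega, show q - s = 0 by omega]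
        rw [Mlt_00, Mlt_00, pow_succ γ s]
        ring

lemma G_eval (α β : ℝ) (m n : ℕ) : G m n α β (-(α*β)) = α^m * β^n := by
  suffices h : ∀ N, ∀ m n : ℕ, ∀ α β : ℝ, m + n ≤ N → G m n α β (-(α*β)) = α^m*β^n from
    h (m+n) m n α β le_rfl
  intro N
  induction N with
  | zero =>
    intro m n α β h
    obtain rfl : m = 0 := by omega
    obtain rfl : n = 0 := by omega
    simpa using G_right_zero 0 α β (-(α*β))
  | succ N ih =>
    intro m n α β h
    rcases Nat.eq_zero_or_pos m with rfl | hm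
    · simpa using G_left_zero n α β (-(α*β))
    rcases Nat.eq_zero_or_pos n with rfl | hn
    · simpa using G_right_zero m α β (-(α*β))
    rcases le_total m n with hmn | hnm
    · rw [G_rec m n α β (-(α*β)) hm hmn, ih (m-1) n α β (by omega), ih m (n-1) α β (by omega),
        ih (m-1) (n-1) α β (by omega)]
      obtain ⟨p, rfl⟩ : ∃ p, m = p + 1 := ⟨m - 1, by omega⟩
      obtain ⟨q, rfl⟩ : ∃ q, n = q + 1 := ⟨n - 1, by omega⟩
      simp only [Nat.add_sub_cancel, pow_succ]
      ring
    · rw [G_symm, show -(α*β) = -(β*α) by ring, G_rec n m β α (-(β*α)) hn hnm,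
        ih (n-1) m β α (by omega), ih n (m-1) β α (by omega), ih (n-1) (m-1) β α (by omega)]
      obtain ⟨p, rfl⟩ : ∃ p, m = p + 1 := ⟨m - 1, by omega⟩
      obtain ⟨q, rfl⟩ : ∃ q, n = q + 1 := ⟨n - 1, by omega⟩
      simp only [Nat.add_sub_cancel, pow_succ]
      ring

theorem doubly_geometric_case
    {Ω : Type*} [MeasurableSpace Ω] (P : Measure Ω) [IsProbabilityMeasure P]
    (ε : ℕ → ℕ → Ω → ℝ)
    (hmeas : ∀ k ℓ : ℕ, Measurable (ε k ℓ))
    (hindep : iIndepFun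
      (fun p : {p : ℕ × ℕ // 1 ≤ p.1 ∧ 1 ≤ p.2} => ε p.1.1 p.1.2) P)
    (hmean : ∀ k ℓ : ℕ, 1 ≤ k → 1 ≤ ℓ → ∫ ω, ε k ℓ ω ∂P = 0)
    (hvar : ∀ k ℓ : ℕ, 1 ≤ k → 1 ≤ ℓ → variance (ε k ℓ) P = 1)
    (α β γ : ℝ)
    (X : ℕ → ℕ → Ω → ℝ)
    (hrec : ∀ k ℓ : ℕ, 1 ≤ k → 1 ≤ ℓ → ∀ ω : Ω,
      X k ℓ ω = α * X (k - 1) ℓ ω + β * X k (ℓ - 1) ω + γ * X (k - 1) (ℓ - 1) ω + ε k ℓ ω)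
    (hbd1 : ∀ k : ℕ, ∀ ω : Ω, X k 0 ω = 0)
    (hbd2 : ∀ ℓ : ℕ, ∀ ω : Ω, X 0 ℓ ω = 0)
    (hγ : γ = -(α * β)) :
    (∀ m n : ℕ, G m n α β (-(α * β)) = α ^ m * β ^ n) ∧
    ∀ k₁ ℓ₁ k₂ ℓ₂ : ℕ, 1 ≤ k₁ → 1 ≤ ℓ₁ → 1 ≤ k₂ → 1 ≤ ℓ₂ →
      cov P (X k₁ ℓ₁) (X k₂ ℓ₂) =
        ∑ i ∈ Finset.Icc 1 (min k₁ k₂), ∑ j ∈ Finset.Icc 1 (min ℓ₁ ℓ₂),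
          α ^ (k₁ + k₂ - 2 * i) * β ^ (ℓ₁ + ℓ₂ - 2 * j) := by
  subst hγ
  refine ⟨fun m n => G_eval α β m n, ?_⟩
  intro k₁ ℓ₁ k₂ ℓ₂ hk₁ hℓ₁ hk₂ hℓ₂
  classical
  -- pointwise moving-average representation of the field
  have hXrep : ∀ k ℓ : ℕ, ∀ ω : Ω, X k ℓ ω =
      ∑ i ∈ Finset.Icc 1 k, ∑ j ∈ Finset.Icc 1 ℓ, α ^ (k - i) * β ^ (ℓ - j) * ε i j ω := by
    have key : ∀ N k ℓ : ℕ, k + ℓ ≤ N → ∀ ω : Ω, X k ℓ ω =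
        ∑ i ∈ Finset.Icc 1 k, ∑ j ∈ Finset.Icc 1 ℓ, α ^ (k - i) * β ^ (ℓ - j) * ε i j ω := by
      intro N
      induction N with
      | zero =>
        intro k ℓ h ω
        obtain rfl : k = 0 := by omega
        simp [hbd2]
      | succ N ih =>
        intro k ℓ h ω
        rcases Nat.eq_zero_or_pos k with rfl | hk
        · simp [hbd2]
        rcases Nat.eq_zero_or_pos ℓ with rfl | hℓ
        · simp [hbd1]
        obtain ⟨p, rfl⟩ : ∃ p, k = p + 1 := ⟨k - 1, by omega⟩
        obtain ⟨q, rfl⟩ : ∃ q, ℓ = q + 1 := ⟨ℓ - 1, by omega⟩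
        rw [hrec (p+1) (q+1) (by omega) (by omega) ω]
        simp only [Nat.add_sub_cancel]
        rw [ih p (q+1) (by omega) ω, ih (p+1) q (by omega) ω, ih p q (by omega) ω]
        have e1 : α * (∑ i ∈ Finset.Icc 1 p, ∑ j ∈ Finset.Icc 1 (q+1),
              α ^ (p - i) * β ^ (q+1 - j) * ε i j ω)
            = ∑ i ∈ Finset.Icc 1 p, ∑ j ∈ Finset.Icc 1 (q+1),
              α ^ (p+1 - i) * β ^ (q+1 - j) * ε i j ω := by
          rw [Finset.mul_sum]
          refine Finset.sum_congr rfl fun i hi => ?_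
          rw [Finset.mul_sum]
          refine Finset.sum_congr rfl fun j hj => ?_
          have hip : i ≤ p := (Finset.mem_Icc.mp hi).2
          rw [show p + 1 - i = (p - i) + 1 by omega, pow_succ]
          ring
        have e2 : β * (∑ i ∈ Finset.Icc 1 (p+1), ∑ j ∈ Finset.Icc 1 q,
              α ^ (p+1 - i) * β ^ (q - j) * ε i j ω)
            = ∑ i ∈ Finset.Icc 1 (p+1), ∑ j ∈ Finset.Icc 1 q,
              α ^ (p+1 - i) * β ^ (q+1 - j) * ε i j ω := by
          rw [Finset.mul_sum]
          refine Finset.sum_congr rfl fun i hi => ?_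
          rw [Finset.mul_sum]
          refine Finset.sum_congr rfl fun j hj => ?_
          have hjq : j ≤ q := (Finset.mem_Icc.mp hj).2
          rw [show q + 1 - j = (q - j) + 1 by omega, pow_succ]
          ring
        have e3 : (-(α*β)) * (∑ i ∈ Finset.Icc 1 p, ∑ j ∈ Finset.Icc 1 q,
              α ^ (p - i) * β ^ (q - j) * ε i j ω)
            = - ∑ i ∈ Finset.Icc 1 p, ∑ j ∈ Finset.Icc 1 q,
              α ^ (p+1 - i) * β ^ (q+1 - j) * ε i j ω := by
          rw [Finset.mul_sum, ← Finset.sum_neg_distrib]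
          refine Finset.sum_congr rfl fun i hi => ?_
          rw [Finset.mul_sum, ← Finset.sum_neg_distrib]
          refine Finset.sum_congr rfl fun j hj => ?_
          have hip : i ≤ p := (Finset.mem_Icc.mp hi).2
          have hjq : j ≤ q := (Finset.mem_Icc.mp hj).2
          rw [show p + 1 - i = (p - i) + 1 by omega, show q + 1 - j = (q - j) + 1 by omega,
            pow_succ, pow_succ]
          ring
        rw [e1, e2, e3]
        have split1 : ∀ g : ℕ → ℝ, ∑ i ∈ Finset.Icc 1 (p+1), g i
            = ∑ i ∈ Finset.Icc 1 p, g i + g (p+1) :=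
          fun g => Finset.sum_Icc_succ_top (by omega) g
        have split2 : ∀ g : ℕ → ℝ, ∑ j ∈ Finset.Icc 1 (q+1), g j
            = ∑ j ∈ Finset.Icc 1 q, g j + g (q+1) :=
          fun g => Finset.sum_Icc_succ_top (by omega) g
        simp only [split1, split2, Finset.sum_add_distrib, Nat.sub_self, pow_zero, one_mul,
          mul_one]
        ring
    exact fun k ℓ ω => key (k + ℓ) k ℓ le_rfl ω
  -- square integrability of the innovations
  have hL2 : ∀ i j : ℕ, 1 ≤ i → 1 ≤ j → MemLp (ε i j) 2 P := by
    intro i j hi hj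
    by_contra hcon
    have htop := evariance_eq_top (hmeas i j).aestronglyMeasurable hcon
    have h1 := hvar i j hi hj
    have hdef : variance (ε i j) P = (evariance (ε i j) P).toReal := rfl
    rw [hdef, htop] at h1
    simp at h1
  have hεint : ∀ i j : ℕ, 1 ≤ i → 1 ≤ j → Integrable (ε i j) P :=
    fun i j hi hj => (hL2 i j hi hj).integrable one_le_two
  have hprod_int : ∀ i j i' j' : ℕ, 1 ≤ i → 1 ≤ j → 1 ≤ i' → 1 ≤ j' →
      Integrable (fun ω => ε i j ω * ε i' j' ω) P := by
    intro i j i' j' hi hj hi' hj'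
    by_cases heq : i = i' ∧ j = j'
    · obtain ⟨rfl, rfl⟩ := heq
      have h2 := (hL2 i j hi hj).integrable_sq
      have hfun : (fun ω => ε i j ω * ε i j ω) = fun ω => ε i j ω ^ 2 := by
        funext ω; rw [pow_two]
      rw [hfun]
      exact h2
    · have hne : (⟨(i,j), hi, hj⟩ : {p : ℕ × ℕ // 1 ≤ p.1 ∧ 1 ≤ p.2})
          ≠ ⟨(i',j'), hi', hj'⟩ := by
        simp only [ne_eq, Subtype.mk.injEq, Prod.mk.injEq]
        tauto
      exact (hindep.indepFun hne).integrable_mul (hεint i j hi hj) (hεint i' j' hi' hj')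
  have hcross : ∀ p q : ℕ × ℕ, 1 ≤ p.1 → 1 ≤ p.2 → 1 ≤ q.1 → 1 ≤ q.2 →
      ∫ ω, ε p.1 p.2 ω * ε q.1 q.2 ω ∂P = if q = p then 1 else 0 := by
    intro p q hp1 hp2 hq1 hq2
    by_cases hpq : q = p
    · subst hpq
      rw [if_pos rfl]
      have hv := hvar q.1 q.2 hq1 hq2
      rw [variance_eq_sub (hL2 q.1 q.2 hq1 hq2), hmean q.1 q.2 hq1 hq2] at hv
      have hfun : (fun ω => ε q.1 q.2 ω * ε q.1 q.2 ω) = fun ω => (ε q.1 q.2 ^ 2) ω := by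
        funext ω; simp [pow_two]
      calc ∫ ω, ε q.1 q.2 ω * ε q.1 q.2 ω ∂P = ∫ ω, (ε q.1 q.2 ^ 2) ω ∂P := by rw [hfun]
        _ = 1 := by
            have := hv
            simpa using this
    · rw [if_neg hpq]
      have hne : (⟨(p.1, p.2), hp1, hp2⟩ : {r : ℕ × ℕ // 1 ≤ r.1 ∧ 1 ≤ r.2})
          ≠ ⟨(q.1, q.2), hq1, hq2⟩ := by
        simp only [ne_eq, Subtype.mk.injEq, Prod.mk.injEq]
        intro hc
        exact hpq (by
          obtain ⟨h1, h2⟩ := hc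
          exact Prod.ext h1.symm h2.symm)
      have hint := (hindep.indepFun hne).integral_mul_eq_mul_integral
        (hεint p.1 p.2 hp1 hp2).aestronglyMeasurable (hεint q.1 q.2 hq1 hq2).aestronglyMeasurable
      simpa [hmean p.1 p.2 hp1 hp2] using hint
  -- mean of the representation is zero
  have hmeanS : ∀ k ℓ : ℕ, ∫ ω, (∑ i ∈ Finset.Icc 1 k, ∑ j ∈ Finset.Icc 1 ℓ,
      α ^ (k - i) * β ^ (ℓ - j) * ε i j ω) ∂P = 0 := by
    intro k ℓ
    rw [integral_finset_sum _ (fun i hi => integrable_finset_sum _ (fun j hj =>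
      ((hεint i j (Finset.mem_Icc.mp hi).1 (Finset.mem_Icc.mp hj).1).const_mul _)))]
    refine Finset.sum_eq_zero fun i hi => ?_
    rw [integral_finset_sum _ (fun j hj =>
      ((hεint i j (Finset.mem_Icc.mp hi).1 (Finset.mem_Icc.mp hj).1).const_mul _))]
    refine Finset.sum_eq_zero fun j hj => ?_
    rw [integral_const_mul, hmean i j (Finset.mem_Icc.mp hi).1 (Finset.mem_Icc.mp hj).1,
      mul_zero]
  -- covariance reduces to the integral of the product
  have covEq : cov P (X k₁ ℓ₁) (X k₂ ℓ₂)
      = ∫ ω, (∑ i ∈ Finset.Icc 1 k₁, ∑ j ∈ Finset.Icc 1 ℓ₁,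
          α ^ (k₁ - i) * β ^ (ℓ₁ - j) * ε i j ω)
        * (∑ i ∈ Finset.Icc 1 k₂, ∑ j ∈ Finset.Icc 1 ℓ₂,
          α ^ (k₂ - i) * β ^ (ℓ₂ - j) * ε i j ω) ∂P := by
    unfold cov
    simp only [hXrep, hmeanS, sub_zero]
  rw [covEq]
  -- flatten to sums over product finsets
  have hflat : ∀ (k ℓ : ℕ) (ω : Ω), (∑ i ∈ Finset.Icc 1 k, ∑ j ∈ Finset.Icc 1 ℓ,
      α ^ (k - i) * β ^ (ℓ - j) * ε i j ω)
      = ∑ p ∈ Finset.Icc 1 k ×ˢ Finset.Icc 1 ℓ, α ^ (k - p.1) * β ^ (ℓ - p.2) * ε p.1 p.2 ω := by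
    intro k ℓ ω
    rw [Finset.sum_product]
  simp only [hflat]
  have hmem : ∀ {k ℓ : ℕ} {p : ℕ × ℕ}, p ∈ Finset.Icc 1 k ×ˢ Finset.Icc 1 ℓ →
      1 ≤ p.1 ∧ p.1 ≤ k ∧ 1 ≤ p.2 ∧ p.2 ≤ ℓ := by
    intro k ℓ p hp
    rw [Finset.mem_product, Finset.mem_Icc, Finset.mem_Icc] at hp
    omega
  have hpt : ∀ ω : Ω,
      (∑ p ∈ Finset.Icc 1 k₁ ×ˢ Finset.Icc 1 ℓ₁, α ^ (k₁ - p.1) * β ^ (ℓ₁ - p.2) * ε p.1 p.2 ω)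
      * (∑ q ∈ Finset.Icc 1 k₂ ×ˢ Finset.Icc 1 ℓ₂, α ^ (k₂ - q.1) * β ^ (ℓ₂ - q.2) * ε q.1 q.2 ω)
      = ∑ p ∈ Finset.Icc 1 k₁ ×ˢ Finset.Icc 1 ℓ₁, ∑ q ∈ Finset.Icc 1 k₂ ×ˢ Finset.Icc 1 ℓ₂,
          (α ^ (k₁ - p.1) * β ^ (ℓ₁ - p.2) * (α ^ (k₂ - q.1) * β ^ (ℓ₂ - q.2)))
            * (ε p.1 p.2 ω * ε q.1 q.2 ω) := by
    intro ω
    rw [Finset.sum_mul_sum]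
    exact Finset.sum_congr rfl fun p _ => Finset.sum_congr rfl fun q _ => by ring
  simp only [hpt]
  rw [integral_finset_sum _ (fun p hp => integrable_finset_sum _ (fun q hq =>
    ((hprod_int p.1 p.2 q.1 q.2 (hmem hp).1 (hmem hp).2.2.1
      (hmem hq).1 (hmem hq).2.2.1).const_mul _)))]
  calc
    ∑ p ∈ Finset.Icc 1 k₁ ×ˢ Finset.Icc 1 ℓ₁, ∫ ω, ∑ q ∈ Finset.Icc 1 k₂ ×ˢ Finset.Icc 1 ℓ₂,
        (α ^ (k₁ - p.1) * β ^ (ℓ₁ - p.2) * (α ^ (k₂ - q.1) * β ^ (ℓ₂ - q.2)))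
          * (ε p.1 p.2 ω * ε q.1 q.2 ω) ∂P
      = ∑ p ∈ Finset.Icc 1 k₁ ×ˢ Finset.Icc 1 ℓ₁,
          ∑ q ∈ Finset.Icc 1 k₂ ×ˢ Finset.Icc 1 ℓ₂,
          (α ^ (k₁ - p.1) * β ^ (ℓ₁ - p.2) * (α ^ (k₂ - q.1) * β ^ (ℓ₂ - q.2)))
            * (if q = p then 1 else 0) := by
        refine Finset.sum_congr rfl fun p hp => ?_
        rw [integral_finset_sum _ (fun q hq =>
          ((hprod_int p.1 p.2 q.1 q.2 (hmem hp).1 (hmem hp).2.2.1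
            (hmem hq).1 (hmem hq).2.2.1).const_mul _))]
        refine Finset.sum_congr rfl fun q hq => ?_
        rw [integral_const_mul,
          hcross p q (hmem hp).1 (hmem hp).2.2.1 (hmem hq).1 (hmem hq).2.2.1]
    _ = ∑ p ∈ Finset.Icc 1 k₁ ×ˢ Finset.Icc 1 ℓ₁,
          (if p ∈ Finset.Icc 1 k₂ ×ˢ Finset.Icc 1 ℓ₂ then
            α ^ (k₁ - p.1) * β ^ (ℓ₁ - p.2) * (α ^ (k₂ - p.1) * β ^ (ℓ₂ - p.2)) else 0) := by
        refine Finset.sum_congr rfl fun p hp => ?_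
        simp only [mul_ite, mul_one, mul_zero]
        rw [Finset.sum_ite_eq' (Finset.Icc 1 k₂ ×ˢ Finset.Icc 1 ℓ₂) p
          (fun q => α ^ (k₁ - p.1) * β ^ (ℓ₁ - p.2) * (α ^ (k₂ - q.1) * β ^ (ℓ₂ - q.2)))]
    _ = ∑ p ∈ (Finset.Icc 1 k₁ ×ˢ Finset.Icc 1 ℓ₁) ∩ (Finset.Icc 1 k₂ ×ˢ Finset.Icc 1 ℓ₂),
          α ^ (k₁ - p.1) * β ^ (ℓ₁ - p.2) * (α ^ (k₂ - p.1) * β ^ (ℓ₂ - p.2)) :=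
        Finset.sum_ite_mem _ _ _
    _ = ∑ p ∈ Finset.Icc 1 (min k₁ k₂) ×ˢ Finset.Icc 1 (min ℓ₁ ℓ₂),
          α ^ (k₁ - p.1) * β ^ (ℓ₁ - p.2) * (α ^ (k₂ - p.1) * β ^ (ℓ₂ - p.2)) := by
        congr 1
        ext p
        simp only [Finset.mem_inter, Finset.mem_product, Finset.mem_Icc]
        omega
    _ = ∑ i ∈ Finset.Icc 1 (min k₁ k₂), ∑ j ∈ Finset.Icc 1 (min ℓ₁ ℓ₂),
          α ^ (k₁ + k₂ - 2 * i) * β ^ (ℓ₁ + ℓ₂ - 2 * j) := by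
        rw [Finset.sum_product]
        refine Finset.sum_congr rfl fun i hi => Finset.sum_congr rfl fun j hj => ?_
        have hi' := Finset.mem_Icc.mp hi
        have hj' := Finset.mem_Icc.mp hj
        rw [show k₁ + k₂ - 2*i = (k₁ - i) + (k₂ - i) by omega,
          show ℓ₁ + ℓ₂ - 2*j = (ℓ₁ - j) + (ℓ₂ - j) by omega, pow_add, pow_add]
        ring
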